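/- arXiv:2303.17507 — 4 statements merged into one kernel-verified Lean document; each statement's English description precedes it below -/
import Mathlib

section
/- In ℂ² ⊗ ℂ³, the four product vectors (|0⟩+|1⟩)⊗(|0⟩+|1⟩+|2⟩), (|0⟩−|1⟩)⊗(|0⟩−|1⟩+|2⟩), |0⟩⊗|0⟩, |1⟩⊗|2⟩ are linearly independent and each is orthogonal to both entangled vectors |0⟩⊗|1⟩ − |1⟩⊗|0⟩ and |0⟩⊗|2⟩ − |1⟩⊗|1⟩; consequently these four product vectors span the orthogonal complement of the span of the two entangled vectors. -/
open scoped ComplexConjugate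

/-- The product (tensor) vector u ⊗ w in ℂ^{d₁} ⊗ ℂ^{d₂} ≅ ℂ^{d₁·d₂}. -/
noncomputable def tp {d₁ d₂ : ℕ} (u : EuclideanSpace ℂ (Fin d₁))
    (w : EuclideanSpace ℂ (Fin d₂)) : EuclideanSpace ℂ (Fin d₁ × Fin d₂) :=
  WithLp.toLp 2 (fun p => u p.1 * w p.2)

/-- Standard basis of ℂ². -/
noncomputable def b2 (i : Fin 2) : EuclideanSpace ℂ (Fin 2) := EuclideanSpace.single i 1
/-- Standard basis of ℂ³. -/
noncomputable def b3 (i : Fin 3) : EuclideanSpace ℂ (Fin 3) := EuclideanSpace.single i 1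

/-- in ℂ² ⊗ ℂ³ the four product vectors are linearly independent,
orthogonal to the two entangled vectors, and span the orthogonal complement of
the span of the two entangled vectors. -/
theorem stmt5 (v : Fin 4 → EuclideanSpace ℂ (Fin 2 × Fin 3))
    (hv : v = ![tp (b2 0 + b2 1) (b3 0 + b3 1 + b3 2),
                tp (b2 0 - b2 1) (b3 0 - b3 1 + b3 2),
                tp (b2 0) (b3 0),
                tp (b2 1) (b3 2)])
    (ψ₁ ψ₂ : EuclideanSpace ℂ (Fin 2 × Fin 3))
    (hψ₁ : ψ₁ = tp (b2 0) (b3 1) - tp (b2 1) (b3 0))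
    (hψ₂ : ψ₂ = tp (b2 0) (b3 2) - tp (b2 1) (b3 1)) :
    LinearIndependent ℂ v ∧
    (∀ i, inner ℂ (v i) ψ₁ = (0 : ℂ) ∧ inner ℂ (v i) ψ₂ = (0 : ℂ)) ∧
    Submodule.span ℂ (Set.range v) = (Submodule.span ℂ {ψ₁, ψ₂})ᗮ := by
  -- linear independence of v
  have hli : LinearIndependent ℂ v := by
    rw [Fintype.linearIndependent_iff]
    intro g hg i
    have h : ∀ p : Fin 2 × Fin 3, ∑ j : Fin 4, g j * v j p = 0 := by
      intro p
      have := congrArg (fun x : EuclideanSpace ℂ (Fin 2 × Fin 3) => x p) hg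
      simpa [Finset.sum_apply, PiLp.smul_apply, smul_eq_mul] using this
    have h01 := h (0,1); have h02 := h (0,2); have h00 := h (0,0); have h12 := h (1,2)
    simp [hv, tp, b2, b3, Fin.sum_univ_four, EuclideanSpace.single_apply] at h01 h02 h00 h12
    fin_cases i
    · show g 0 = 0; linear_combination (h01 + h02)/2
    · show g 1 = 0; linear_combination (h02 - h01)/2
    · show g 2 = 0; linear_combination h00 - h02
    · show g 3 = 0; linear_combination h12 - h01
  -- orthogonality
  have horth : ∀ i, inner ℂ (v i) ψ₁ = (0 : ℂ) ∧ inner ℂ (v i) ψ₂ = (0 : ℂ) := by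
    intro i
    fin_cases i <;>
      constructor <;>
      simp [hv, hψ₁, hψ₂, PiLp.inner_apply, tp, b2, b3, Fintype.sum_prod_type,
        Fin.sum_univ_succ, EuclideanSpace.single_apply]
  refine ⟨hli, horth, ?_⟩
  -- v i is in the orthogonal complement
  have hmem : ∀ i, v i ∈ (Submodule.span ℂ {ψ₁, ψ₂})ᗮ := by
    intro i
    rw [Submodule.mem_orthogonal]
    intro u hu
    have key : ∀ ψ ∈ ({ψ₁, ψ₂} : Set (EuclideanSpace ℂ (Fin 2 × Fin 3))),
        (inner ℂ ψ (v i) : ℂ) = 0 := by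
      rintro ψ (rfl | rfl)
      · rw [← inner_conj_symm, (horth i).1, map_zero]
      · rw [← inner_conj_symm, (horth i).2, map_zero]
    induction hu using Submodule.span_induction with
    | mem x hx => exact key x hx
    | zero => simp
    | add x y _ _ hx hy => rw [inner_add_left, hx, hy, add_zero]
    | smul c x _ hx => rw [inner_smul_left, hx, mul_zero]
  have hle : Submodule.span ℂ (Set.range v) ≤ (Submodule.span ℂ {ψ₁, ψ₂})ᗮ := by
    rw [Submodule.span_le]
    rintro x ⟨i, rfl⟩
    exact hmem i
  -- dimension count
  have hψli : LinearIndependent ℂ ![ψ₁, ψ₂] := by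
    rw [Fintype.linearIndependent_iff]
    intro g hg i
    have h : ∀ p : Fin 2 × Fin 3, ∑ j : Fin 2, g j * ![ψ₁, ψ₂] j p = 0 := by
      intro p
      have := congrArg (fun x : EuclideanSpace ℂ (Fin 2 × Fin 3) => x p) hg
      simpa [Finset.sum_apply, PiLp.smul_apply, smul_eq_mul] using this
    have h01 := h (0,1); have h02 := h (0,2)
    simp [hψ₁, hψ₂, tp, b2, b3, Fin.sum_univ_two, EuclideanSpace.single_apply] at h01 h02
    fin_cases i
    · show g 0 = 0; linear_combination h01
    · show g 1 = 0; linear_combination h02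
  have hset : ({ψ₁, ψ₂} : Set (EuclideanSpace ℂ (Fin 2 × Fin 3))) = Set.range ![ψ₁, ψ₂] := by
    ext x
    simp [Fin.exists_fin_two]
    tauto
  have hr1 : Module.finrank ℂ (Submodule.span ℂ (Set.range v)) = 4 := by
    rw [finrank_span_eq_card hli]; simp
  have hr2 : Module.finrank ℂ (Submodule.span ℂ ({ψ₁, ψ₂} :
      Set (EuclideanSpace ℂ (Fin 2 × Fin 3)))) = 2 := by
    rw [hset, finrank_span_eq_card hψli]; simp
  have htot : Module.finrank ℂ (EuclideanSpace ℂ (Fin 2 × Fin 3)) = 6 := by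
    simp [finrank_euclideanSpace]
  have hsum := Submodule.finrank_add_finrank_orthogonal
    (K := Submodule.span ℂ ({ψ₁, ψ₂} : Set (EuclideanSpace ℂ (Fin 2 × Fin 3))))
  rw [hr2, htot] at hsum
  exact Submodule.eq_of_le_of_finrank_eq hle (by omega)
end

section
/- In ℂ² ⊗ ℂ³, every nonzero vector in the span of |0⟩⊗|1⟩ − |1⟩⊗|0⟩ and |0⟩⊗|2⟩ − |1⟩⊗|1⟩ is entangled, i.e., is not of the form u ⊗ w for any u ∈ ℂ², w ∈ ℂ³. -/
open scoped ComplexConjugate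

/-- every nonzero vector in the span of |0⟩⊗|1⟩ − |1⟩⊗|0⟩ and
|0⟩⊗|2⟩ − |1⟩⊗|1⟩ in ℂ² ⊗ ℂ³ is entangled (not a product vector). -/
theorem stmt6 (ψ₁ ψ₂ : EuclideanSpace ℂ (Fin 2 × Fin 3))
    (hψ₁ : ψ₁ = tp (b2 0) (b3 1) - tp (b2 1) (b3 0))
    (hψ₂ : ψ₂ = tp (b2 0) (b3 2) - tp (b2 1) (b3 1)) :
    ∀ x ∈ Submodule.span ℂ ({ψ₁, ψ₂} : Set (EuclideanSpace ℂ (Fin 2 × Fin 3))), x ≠ 0 →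
      ¬ ∃ (u : EuclideanSpace ℂ (Fin 2)) (w : EuclideanSpace ℂ (Fin 3)), x = tp u w := by
  intro x hx hx0
  rintro ⟨u, w, hxw⟩
  rw [Submodule.mem_span_pair] at hx
  obtain ⟨a, b, hab⟩ := hx
  subst hψ₁ hψ₂ hxw
  have key : ∀ p : Fin 2 × Fin 3,
      a * ((tp (b2 0) (b3 1) - tp (b2 1) (b3 0)) p)
        + b * ((tp (b2 0) (b3 2) - tp (b2 1) (b3 1)) p) = u p.1 * w p.2 := by
    intro p
    have h := congrArg (fun v => v p) hab
    simpa [tp, PiLp.add_apply, PiLp.smul_apply, smul_eq_mul] using h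
  have e00 := key (0, 0)
  have e01 := key (0, 1)
  have e02 := key (0, 2)
  have e10 := key (1, 0)
  have e11 := key (1, 1)
  have e12 := key (1, 2)
  simp only [tp, b2, b3, PiLp.sub_apply, EuclideanSpace.single_apply] at e00 e01 e02 e10 e11 e12
  norm_num [Fin.ext_iff] at e00 e01 e02 e10 e11 e12
  have ha : a = 0 := by
    rcases e00 with h | h
    · rw [e01, h]; ring
    · have := e10; rw [h, mul_zero] at this; linear_combination -this
  have hb : b = 0 := by
    rcases e12 with h | h
    · have := e11; rw [h, zero_mul] at this; linear_combination -this
    · rw [e02, h]; ring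
  apply hx0
  rw [← hab, ha, hb]
  simp
end

section
/- In ℂ³ ⊗ ℂ³, consider the five (unnormalized) Tiles product vectors: |0⟩⊗(|0⟩−|1⟩), (|0⟩−|1⟩)⊗|2⟩, |2⟩⊗(|1⟩−|2⟩), (|1⟩−|2⟩)⊗|0⟩, (|0⟩+|1⟩+|2⟩)⊗(|0⟩+|1⟩+|2⟩). These five vectors are pairwise orthogonal, and there is no nonzero product vector u ⊗ w ∈ ℂ³ ⊗ ℂ³ orthogonal to all five of them. -/
open scoped ComplexConjugate

/-- The standard basis vector |i⟩ of ℂ³. -/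
noncomputable def e (i : Fin 3) : EuclideanSpace ℂ (Fin 3) := EuclideanSpace.single i 1

set_option linter.unreachableTactic false
set_option linter.unusedTactic false

lemma key_tiles (a b c x y z : ℂ) (h1 : a*(x-y)=0) (h2 : (a-b)*z=0) (h3 : c*(y-z)=0)
    (h4 : (b-c)*x=0) (h5 : (a+b+c)*(x+y+z)=0) :
    (a=0 ∧ b=0 ∧ c=0) ∨ (x=0 ∧ y=0 ∧ z=0) := by
  rw [mul_eq_zero] at h1 h2 h3 h4 h5
  rw [sub_eq_zero] at *
  rcases h1 with h1|h1 <;> rcases h2 with h2|h2 <;> rcases h3 with h3|h3 <;>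
    rcases h4 with h4|h4 <;> rcases h5 with h5|h5 <;> subst_vars <;>
    simp_all <;>
    first
      | (left; first | (refine ⟨?_,?_,?_⟩ <;> linear_combination h5/3) | linear_combination h5/3)
      | (right; first | (refine ⟨?_,?_,?_⟩ <;> linear_combination h5/3) | linear_combination h5/3)

/-- the five Tiles product vectors in ℂ³ ⊗ ℂ³ are pairwise
orthogonal and no nonzero product vector is orthogonal to all five of them
(the Tiles set is an orthogonal unextendible product basis). -/
theorem stmt7 (t : Fin 5 → EuclideanSpace ℂ (Fin 3 × Fin 3))
    (ht : t = ![tp (e 0) (e 0 - e 1),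
                tp (e 0 - e 1) (e 2),
                tp (e 2) (e 1 - e 2),
                tp (e 1 - e 2) (e 0),
                tp (e 0 + e 1 + e 2) (e 0 + e 1 + e 2)]) :
    (∀ i j, i ≠ j → inner ℂ (t i) (t j) = (0 : ℂ)) ∧
    ¬ ∃ (u w : EuclideanSpace ℂ (Fin 3)),
        tp u w ≠ 0 ∧ ∀ i, inner ℂ (t i) (tp u w) = (0 : ℂ) := by
  subst ht
  constructor
  · intro i j hij
    fin_cases i <;> fin_cases j <;> simp_all <;>
      simp [tp, e, PiLp.inner_apply, Fintype.sum_prod_type, Fin.sum_univ_three,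
        EuclideanSpace.single_apply]
  · rintro ⟨u, w, hn, ho⟩
    have h0 := ho 0
    have h1 := ho 1
    have h2 := ho 2
    have h3 := ho 3
    have h4 := ho 4
    simp only [Matrix.cons_val_zero, Matrix.cons_val_one, Matrix.head_cons,
      Matrix.cons_val_two, Matrix.tail_cons, Matrix.cons_val_three,
      Matrix.cons_val_four] at h0 h1 h2 h3 h4
    simp [tp, e, PiLp.inner_apply, Fintype.sum_prod_type, Fin.sum_univ_three,
      EuclideanSpace.single_apply] at h0 h1 h2 h3 h4
    have hk := key_tiles (u 0) (u 1) (u 2) (w 0) (w 1) (w 2)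
      (by linear_combination h0) (by linear_combination h1) (by linear_combination h2)
      (by linear_combination h3) (by linear_combination h4)
    apply hn
    ext ⟨i, j⟩
    rcases hk with ⟨ha, hb, hc⟩ | ⟨hx, hy, hz⟩ <;>
      fin_cases i <;> fin_cases j <;> simp [tp, *]
end

section
/- Let ρ = Σᵢ pᵢ |uᵢ⊗wᵢ⟩⟨uᵢ⊗wᵢ| be a finite convex combination of rank-one projections onto unit product vectors in ℂ^{d₁} ⊗ ℂ^{d₂}. Then the partial transpose of ρ on the second factor is positive semidefinite (i.e., every separable state is PPT). -/
open scoped ComplexConjugate ComplexOrder Matrix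

/-- Partial transpose on the second tensor factor. -/
def ptrans {d₁ d₂ : ℕ} (X : Matrix (Fin d₁ × Fin d₂) (Fin d₁ × Fin d₂) ℂ) :
    Matrix (Fin d₁ × Fin d₂) (Fin d₁ × Fin d₂) ℂ :=
  Matrix.of fun p q => X (p.1, q.2) (q.1, p.2)


/-- A rank-one matrix `v vᴴ` is positive semidefinite. -/
lemma rankOne_psd {I : Type*} [Fintype I] [DecidableEq I] (v : I → ℂ) :
    (Matrix.of fun a b => v a * conj (v b)).PosSemidef := by
  have h := Matrix.posSemidef_conjTranspose_mul_self
    (Matrix.of fun (_ : Fin 1) b => conj (v b))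
  have he : (Matrix.of fun (_ : Fin 1) b => conj (v b))ᴴ *
      (Matrix.of fun (_ : Fin 1) b => conj (v b)) =
      Matrix.of fun a b => v a * conj (v b) := by
    ext a b
    simp [Matrix.mul_apply, Matrix.conjTranspose_apply]
  rwa [he] at h

lemma psd_sum_smul {I J : Type*} [Fintype I] [Fintype J] [DecidableEq J]
    (c : I → ℝ) (hc : ∀ i, 0 ≤ c i) (M : I → Matrix J J ℂ)
    (hM : ∀ i, (M i).PosSemidef) :
    (∑ i, (c i : ℂ) • M i).PosSemidef := by
  refine Matrix.posSemidef_iff_dotProduct_mulVec.mpr ⟨?_, ?_⟩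
  · unfold Matrix.IsHermitian
    rw [Matrix.conjTranspose_sum]
    refine Finset.sum_congr rfl fun i _ => ?_
    rw [Matrix.conjTranspose_smul, (hM i).1.eq]
    simp
  · intro x
    refine Finset.sum_induction _ (fun (A : Matrix J J ℂ) => 0 ≤ dotProduct (star x) (A.mulVec x))
      ?_ ?_ ?_
    · intro A B hA hB
      rw [Matrix.add_mulVec, dotProduct_add]
      exact add_nonneg hA hB
    · simp [Matrix.zero_mulVec]
    · intro i _
      rw [Matrix.smul_mulVec]
      have h1 : (0:ℂ) ≤ (c i : ℂ) := by
        rw [Complex.le_def]; simp [hc i]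
      have := mul_nonneg h1 ((hM i).dotProduct_mulVec_nonneg x)
      simpa [dotProduct_smul, smul_eq_mul] using this

/-- every separable state is PPT: the partial transpose of a
finite convex combination of projections onto unit product vectors is
positive semidefinite. -/
theorem stmt12 (d₁ d₂ m : ℕ) (p : Fin m → ℝ) (hp : ∀ i, 0 < p i)
    (hpsum : ∑ i, p i = 1)
    (u : Fin m → EuclideanSpace ℂ (Fin d₁)) (w : Fin m → EuclideanSpace ℂ (Fin d₂))
    (hunit : ∀ i, ‖u i‖ = 1 ∧ ‖w i‖ = 1)
    (ρ : Matrix (Fin d₁ × Fin d₂) (Fin d₁ × Fin d₂) ℂ)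
    (hρ : ρ = ∑ i, ((p i : ℂ)) •
      Matrix.of (fun a b => tp (u i) (w i) a * conj (tp (u i) (w i) b))) :
    (ptrans ρ).PosSemidef := by
  have hform : ptrans ρ = ∑ i, ((p i : ℂ)) •
      Matrix.of (fun a b => (u i a.1 * conj (w i a.2)) *
        conj (u i b.1 * conj (w i b.2))) := by
    subst hρ
    ext a b
    simp [ptrans, tp, Matrix.sum_apply, Matrix.smul_apply]
    refine Finset.sum_congr rfl fun i _ => ?_
    ring
  rw [hform]
  exact psd_sum_smul p (fun i => (hp i).le) _
    (fun i => rankOne_psd (fun a : Fin d₁ × Fin d₂ => u i a.1 * conj (w i a.2)))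
end
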